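/- Let n ≥ 1 and let U be an invertible n × n matrix over 𝔽₂ = ZMod 2 with F := U⁻¹. Define U(i) := {k : U_{k,i} = 1}, F(i) := {k : F_{i,k} = 1}, P(i) := F(0) △ ⋯ △ F(i−1), and R(i) := P(i) △ F(i). Then for every i ∈ {0,…,n−1}: |U(i) ∩ P(i)| is even and |U(i) ∩ R(i)| is odd. Consequently, the n-qubit Pauli strings satisfy X_{U(i)} Z_{P(i)} = Z_{P(i)} X_{U(i)} and X_{U(i)} Z_{R(i)} = − Z_{R(i)} X_{U(i)}. -/

import Mathlib

open Matrix Finset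
open scoped symmDiff

namespace FQ

/-- Pauli X. -/
noncomputable def X : Matrix (ZMod 2) (ZMod 2) ℂ := !![0, 1; 1, 0]

/-- Pauli Y. -/
noncomputable def Y : Matrix (ZMod 2) (ZMod 2) ℂ := !![0, -Complex.I; Complex.I, 0]

/-- Pauli Z. -/
noncomputable def Z : Matrix (ZMod 2) (ZMod 2) ℂ := !![1, 0; 0, -1]

/-- Tensor product `M 0 ⊗ M 1 ⊗ ⋯ ⊗ M (n-1)` of a family of single-qubit operators, as a
`2^n × 2^n` matrix indexed by functions `Fin n → ZMod 2`
(the identification of `(ℂ²)^⊗n` with `ℂ^(2^n)`). -/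
noncomputable def tens {n : ℕ} (M : Fin n → Matrix (ZMod 2) (ZMod 2) ℂ) :
    Matrix (Fin n → ZMod 2) (Fin n → ZMod 2) ℂ :=
  Matrix.of fun f g => ∏ i, M i (f i) (g i)

/-- The Pauli string `X_S`: Pauli `X` on each tensor factor in `S`, identity elsewhere. -/
noncomputable def Xstr {n : ℕ} (S : Finset (Fin n)) :
    Matrix (Fin n → ZMod 2) (Fin n → ZMod 2) ℂ :=
  tens fun j => if j ∈ S then X else 1

/-- The Pauli string `Y_S`: Pauli `Y` on each tensor factor in `S`, identity elsewhere. -/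
noncomputable def Ystr {n : ℕ} (S : Finset (Fin n)) :
    Matrix (Fin n → ZMod 2) (Fin n → ZMod 2) ℂ :=
  tens fun j => if j ∈ S then Y else 1

/-- The Pauli string `Z_S`: Pauli `Z` on each tensor factor in `S`, identity elsewhere. -/
noncomputable def Zstr {n : ℕ} (S : Finset (Fin n)) :
    Matrix (Fin n → ZMod 2) (Fin n → ZMod 2) ℂ :=
  tens fun j => if j ∈ S then Z else 1

/-- The `2^n × 2^n` permutation matrix `m_U` of the linear encoding determined by
`U ∈ GL_n(𝔽₂)`, sending the basis vector `e_f` to `e_{U f}`. -/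
noncomputable def encMat {n : ℕ} (U : Matrix (Fin n) (Fin n) (ZMod 2)) :
    Matrix (Fin n → ZMod 2) (Fin n → ZMod 2) ℂ :=
  Matrix.of fun g f => if g = U.mulVec f then 1 else 0

/-- `U(i) = {k : U_{k,i} = 1}`, the set of row indices of nonzero elements of the `i`-th
column of `U`. -/
def colSet {n : ℕ} (U : Matrix (Fin n) (Fin n) (ZMod 2)) (i : Fin n) : Finset (Fin n) :=
  Finset.univ.filter fun k => U k i = 1

/-- `F(i) = {k : F_{i,k} = 1}`, the set of column indices of nonzero elements of the `i`-th
row of `F`. -/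
def rowSet {n : ℕ} (F : Matrix (Fin n) (Fin n) (ZMod 2)) (i : Fin n) : Finset (Fin n) :=
  Finset.univ.filter fun k => F i k = 1

/-- `rowSet` with a natural-number index (junk value `∅` out of range). -/
def rowSetN {n : ℕ} (F : Matrix (Fin n) (Fin n) (ZMod 2)) (i : ℕ) : Finset (Fin n) :=
  if h : i < n then rowSet F ⟨i, h⟩ else ∅

/-- `P(i) = F(0) △ F(1) △ ⋯ △ F(i−1)`, the iterated symmetric difference of the rows of `F`. -/
def Pset {n : ℕ} (F : Matrix (Fin n) (Fin n) (ZMod 2)) : ℕ → Finset (Fin n)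
  | 0 => ∅
  | i + 1 => Pset F i ∆ rowSetN F i

/-- `R(i) = P(i) △ F(i)`. -/
def Rset {n : ℕ} (F : Matrix (Fin n) (Fin n) (ZMod 2)) (i : ℕ) : Finset (Fin n) :=
  Pset F i ∆ rowSetN F i

section Aux

variable {n : ℕ}

lemma zmod2_cases : ∀ a : ZMod 2, a = 0 ∨ a = 1 := by decide

lemma zmod2_univ : (Finset.univ : Finset (ZMod 2)) = {0, 1} := by decide

lemma sum_zmod2 {α : Type*} [AddCommMonoid α] (f : ZMod 2 → α) : ∑ i, f i = f 0 + f 1 := by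
  rw [zmod2_univ]
  rw [Finset.sum_insert (by decide), Finset.sum_singleton]

lemma ZX_eq : Z * X = -(X * Z) := by
  have hX : X 0 0 = 0 ∧ X 0 1 = 1 ∧ X 1 0 = 1 ∧ X 1 1 = 0 := ⟨rfl, rfl, rfl, rfl⟩
  have hZ : Z 0 0 = 1 ∧ Z 0 1 = 0 ∧ Z 1 0 = 0 ∧ Z 1 1 = -1 := ⟨rfl, rfl, rfl, rfl⟩
  ext a b
  rcases zmod2_cases a with ha | ha <;> rcases zmod2_cases b with hb | hb <;>
    subst ha <;> subst hb <;>
    simp [Matrix.mul_apply, sum_zmod2, hX, hZ]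

lemma tens_mul (M N : Fin n → Matrix (ZMod 2) (ZMod 2) ℂ) :
    tens M * tens N = tens fun i => M i * N i := by
  ext f g
  simp only [tens, Matrix.mul_apply, Matrix.of_apply]
  have h : ∀ h : Fin n → ZMod 2, (∏ i, M i (f i) (h i)) * ∏ i, N i (h i) (g i)
      = ∏ i, (M i (f i) (h i) * N i (h i) (g i)) := fun h => (Finset.prod_mul_distrib).symm
  simp_rw [h]
  rw [← Fintype.prod_sum fun i a => M i (f i) a * N i a (g i)]

lemma tens_smul (M N : Fin n → Matrix (ZMod 2) (ZMod 2) ℂ) (ε : Fin n → ℂ)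
    (h : ∀ i, N i = ε i • M i) : tens N = (∏ i, ε i) • tens M := by
  ext f g
  simp only [tens, Matrix.smul_apply, Matrix.of_apply, smul_eq_mul, h, Matrix.smul_apply,
    smul_eq_mul]
  rw [Finset.prod_mul_distrib]

lemma XZ_comm (S T : Finset (Fin n)) :
    Zstr T * Xstr S = ((-1 : ℂ) ^ (S ∩ T).card) • (Xstr S * Zstr T) := by
  rw [Xstr, Zstr, tens_mul, tens_mul]
  rw [tens_smul (fun i => (if i ∈ S then X else 1) * (if i ∈ T then Z else 1))
    (fun i => (if i ∈ T then Z else 1) * (if i ∈ S then X else 1))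
    (fun i => if i ∈ S ∩ T then (-1 : ℂ) else 1) ?_]
  · congr 1
    rw [Finset.prod_ite_mem, Finset.univ_inter, Finset.prod_const]
  · intro i
    by_cases hS : i ∈ S <;> by_cases hT : i ∈ T <;>
      simp [hS, hT, ZX_eq]

lemma card_cast_symmDiff (A B : Finset (Fin n)) :
    (((A ∆ B).card : ZMod 2)) = (A.card : ZMod 2) + (B.card : ZMod 2) := by
  have h1 : (A ∆ B).card = (A \ B).card + (B \ A).card := by
    rw [symmDiff_def, Finset.sup_eq_union]
    exact Finset.card_union_of_disjoint disjoint_sdiff_sdiff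
  have h2 := Finset.card_sdiff_add_card_inter A B
  have h3 := Finset.card_sdiff_add_card_inter B A
  rw [Finset.inter_comm B A] at h3
  have hnat : (A ∆ B).card + 2 * (A ∩ B).card = A.card + B.card := by omega
  have := congrArg (Nat.cast : ℕ → ZMod 2) hnat
  push_cast at this
  rw [show (2 : ZMod 2) = 0 by decide, zero_mul, add_zero] at this
  exact this

lemma card_inter_cast (A B : Finset (Fin n)) :
    (((A ∩ B).card : ZMod 2)) =
      ∑ k, (if k ∈ A then (1 : ZMod 2) else 0) * (if k ∈ B then 1 else 0) := by
  have h : ∀ k : Fin n, (if k ∈ A then (1 : ZMod 2) else 0) * (if k ∈ B then 1 else 0)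
      = if k ∈ A ∩ B then 1 else 0 := by
    intro k
    by_cases hA : k ∈ A <;> by_cases hB : k ∈ B <;> simp [hA, hB]
  simp_rw [h]
  rw [Finset.sum_boole]
  congr 1
  rw [Finset.filter_mem_eq_inter, Finset.univ_inter]

lemma inter_card_eq_mul (U F : Matrix (Fin n) (Fin n) (ZMod 2)) (i j : Fin n) :
    (((colSet U i ∩ rowSet F j).card : ZMod 2)) = (F * U) j i := by
  rw [card_inter_cast, Matrix.mul_apply]
  apply Finset.sum_congr rfl
  intro k _
  have hu : (if k ∈ colSet U i then (1 : ZMod 2) else 0) = U k i := by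
    simp only [colSet, Finset.mem_filter, Finset.mem_univ, true_and]
    rcases zmod2_cases (U k i) with h | h <;> simp [h]
  have hf : (if k ∈ rowSet F j then (1 : ZMod 2) else 0) = F j k := by
    simp only [rowSet, Finset.mem_filter, Finset.mem_univ, true_and]
    rcases zmod2_cases (F j k) with h | h <;> simp [h]
  rw [hu, hf, mul_comm]

lemma Pcard (U F : Matrix (Fin n) (Fin n) (ZMod 2)) (hFU : F * U = 1) (i : Fin n) :
    ∀ m, m ≤ n → ((colSet U i ∩ Pset F m).card : ZMod 2) = if (i : ℕ) < m then 1 else 0 := by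
  intro m
  induction m with
  | zero => intro _; simp [Pset]
  | succ m ih =>
    intro hm
    have hmn : m < n := hm
    have hstep : colSet U i ∩ Pset F (m + 1)
        = (colSet U i ∩ Pset F m) ∆ (colSet U i ∩ rowSetN F m) := by
      show colSet U i ⊓ (Pset F m ∆ rowSetN F m)
          = (colSet U i ⊓ Pset F m) ∆ (colSet U i ⊓ rowSetN F m)
      exact inf_symmDiff_distrib_left _ _ _
    rw [hstep, card_cast_symmDiff, ih (le_of_lt hmn)]
    have hrow : rowSetN F m = rowSet F ⟨m, hmn⟩ := dif_pos hmn
    rw [hrow, inter_card_eq_mul U F i ⟨m, hmn⟩, hFU, Matrix.one_apply]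
    by_cases h1 : (i : ℕ) < m
    · have h2 : (i : ℕ) < m + 1 := by omega
      have h3 : (⟨m, hmn⟩ : Fin n) ≠ i := by
        intro he; rw [← he] at h1; simp at h1
      simp [h1, h2, h3]
    · by_cases h4 : (m : ℕ) = (i : ℕ)
      · have h5 : (⟨m, hmn⟩ : Fin n) = i := Fin.ext h4
        have h6 : (i : ℕ) < m + 1 := by omega
        simp [h1, h5, h6]
      · have h7 : ¬ (i : ℕ) < m + 1 := by omega
        have h8 : (⟨m, hmn⟩ : Fin n) ≠ i := fun he => h4 (congrArg Fin.val he)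
        simp [h1, h7, h8]

end Aux

/-- for a linear encoding `U ∈ GL_n(𝔽₂)` with `F = U⁻¹`,
`P(i) = F(0) △ ⋯ △ F(i−1)` and `R(i) = P(i) △ F(i)`, the intersection `U(i) ∩ P(i)` has even
cardinality and `U(i) ∩ R(i)` has odd cardinality; consequently `X_{U(i)}` commutes with
`Z_{P(i)}` and anticommutes with `Z_{R(i)}`. -/
theorem linear_encoding_parity_commutation (n : ℕ) (hn : 1 ≤ n)
    (U : Matrix (Fin n) (Fin n) (ZMod 2)) (hU : IsUnit U) :
    ∀ i : Fin n,
      Even ((colSet U i ∩ Pset U⁻¹ (i : ℕ)).card) ∧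
      Odd ((colSet U i ∩ Rset U⁻¹ (i : ℕ)).card) ∧
      Xstr (colSet U i) * Zstr (Pset U⁻¹ (i : ℕ)) =
        Zstr (Pset U⁻¹ (i : ℕ)) * Xstr (colSet U i) ∧
      Xstr (colSet U i) * Zstr (Rset U⁻¹ (i : ℕ)) =
        -(Zstr (Rset U⁻¹ (i : ℕ)) * Xstr (colSet U i)) := by
  intro i
  set F := U⁻¹ with hF
  have hFU : F * U = 1 := by
    rw [hF]
    exact Matrix.nonsing_inv_mul U ((Matrix.isUnit_iff_isUnit_det U).mp hU)
  have hPeven : Even ((colSet U i ∩ Pset F (i : ℕ)).card) := by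
    rw [← ZMod.natCast_eq_zero_iff_even]
    rw [Pcard U F hFU i (i : ℕ) (le_of_lt i.isLt)]
    simp
  have hiR : colSet U i ∩ Rset F (i : ℕ) = colSet U i ∩ Pset F ((i : ℕ) + 1) := rfl
  have hRodd : Odd ((colSet U i ∩ Rset F (i : ℕ)).card) := by
    rw [← ZMod.natCast_eq_one_iff_odd, hiR]
    rw [Pcard U F hFU i ((i : ℕ) + 1) i.isLt]
    simp
  refine ⟨hPeven, hRodd, ?_, ?_⟩
  · have h := XZ_comm (colSet U i) (Pset F (i : ℕ))
    rw [hPeven.neg_one_pow, one_smul] at h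
    exact h.symm
  · have h := XZ_comm (colSet U i) (Rset F (i : ℕ))
    rw [hRodd.neg_one_pow, neg_one_smul] at h
    rw [eq_comm] at h
    exact neg_eq_iff_eq_neg.mp h

end FQ
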